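/- Let γ be a density operator on D ⊗ E with Tr_D γ = ρ having full support on E, and suppose {R^x}_x is a POVM on D such that the post-measurement second-player states ρ^x := Tr_D[(√(R^x) ⊗ I) γ (√(R^x) ⊗ I)] are pairwise orthogonally supported. Then there exists a projective measurement {Q^x}_x on E with Q^x ρ Q^x = ρ^x for all x, and moreover measuring {R^x} on D and {Q^x} on E always yields equal outcomes: Tr[(R^{x'} ⊗ Q^x) γ] = 0 for x ≠ x'. -/

import Mathlib

open Matrix ComplexOrder Kronecker

/-- Partial trace over the first tensor factor. -/
noncomputable def ptraceLeft {D E : Type*} [Fintype D] [Fintype E]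
    (γ : Matrix (D × E) (D × E) ℂ) : Matrix E E ℂ :=
  Matrix.of fun e e' => ∑ d, γ (d, e) (d, e')

/-- The square root of a positive semidefinite matrix, as `Matrix.PosSemidef.sqrt` was defined
in the older Mathlib (removed since). -/
noncomputable def Matrix.PosSemidef.sqrt {n 𝕜 : Type*} [Fintype n] [DecidableEq n] [RCLike 𝕜]
    {A : Matrix n n 𝕜} (hA : A.PosSemidef) : Matrix n n 𝕜 :=
  hA.1.eigenvectorUnitary.1 * diagonal ((↑) ∘ (√·) ∘ hA.1.eigenvalues) *
    (star hA.1.eigenvectorUnitary : Matrix n n 𝕜)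

lemma Matrix.PosSemidef.sqrt_mul_self {n 𝕜 : Type*} [Fintype n] [DecidableEq n] [RCLike 𝕜]
    {A : Matrix n n 𝕜} (hA : A.PosSemidef) : hA.sqrt * hA.sqrt = A := by
  set U : Matrix n n 𝕜 := hA.1.eigenvectorUnitary.1 with hUdef
  set Dg : Matrix n n 𝕜 := diagonal ((↑) ∘ (√·) ∘ hA.1.eigenvalues) with hDg
  have hU : (star hA.1.eigenvectorUnitary : Matrix n n 𝕜) * U = 1 := by simp [hUdef]
  have hd : Dg * Dg = (diagonal (RCLike.ofReal ∘ hA.1.eigenvalues) : Matrix n n 𝕜) := by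
    rw [hDg, diagonal_mul_diagonal]; congr 1; funext i
    simp only [Function.comp]
    rw [← RCLike.ofReal_mul, Real.mul_self_sqrt (hA.eigenvalues_nonneg i)]
  conv_rhs => rw [hA.1.spectral_theorem, Unitary.conjStarAlgAut_apply]
  unfold Matrix.PosSemidef.sqrt
  rw [← hUdef, ← hDg]
  calc U * Dg * (star hA.1.eigenvectorUnitary : Matrix n n 𝕜) *
        (U * Dg * (star hA.1.eigenvectorUnitary : Matrix n n 𝕜))
      = U * (Dg * ((star hA.1.eigenvectorUnitary : Matrix n n 𝕜) * U) * Dg) *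
        (star hA.1.eigenvectorUnitary : Matrix n n 𝕜) := by simp only [Matrix.mul_assoc]
    _ = _ := by rw [hU, Matrix.mul_one, hd]

lemma Matrix.PosSemidef.posSemidef_sqrt {n 𝕜 : Type*} [Fintype n] [DecidableEq n] [RCLike 𝕜]
    {A : Matrix n n 𝕜} (hA : A.PosSemidef) : hA.sqrt.PosSemidef := by
  unfold Matrix.PosSemidef.sqrt
  have h : (diagonal ((↑) ∘ (√·) ∘ hA.1.eigenvalues) : Matrix n n 𝕜).PosSemidef :=
    posSemidef_diagonal_iff.2 (fun i => RCLike.ofReal_nonneg.2 (Real.sqrt_nonneg _))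
  exact h.mul_mul_conjTranspose_same _

section Aux

variable {D E : Type*} [Fintype D] [DecidableEq D] [Fintype E] [DecidableEq E]

set_option linter.unusedSectionVars false

lemma aux_ptraceLeft_kmk (A B : Matrix D D ℂ) (γ : Matrix (D × E) (D × E) ℂ) :
    ptraceLeft ((A ⊗ₖ (1 : Matrix E E ℂ)) * γ * (B ⊗ₖ (1 : Matrix E E ℂ)))
      = ptraceLeft (((B * A) ⊗ₖ (1 : Matrix E E ℂ)) * γ) := by
  ext e e'
  simp only [ptraceLeft, Matrix.of_apply, Matrix.mul_apply, kroneckerMap_apply,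
    Fintype.sum_prod_type, Matrix.one_apply, mul_ite, mul_one, mul_zero, ite_mul, zero_mul,
    Finset.sum_ite_eq, Finset.sum_ite_eq', Finset.mem_univ, if_true]
  rw [Finset.sum_comm]
  apply Finset.sum_congr rfl; intro d1 _
  simp only [Finset.sum_mul, Finset.mul_sum]
  rw [Finset.sum_comm]
  apply Finset.sum_congr rfl; intro a _
  apply Finset.sum_congr rfl; intro b _
  ring

lemma aux_trace_kron (A : Matrix D D ℂ) (B : Matrix E E ℂ) (γ : Matrix (D × E) (D × E) ℂ) :
    ((A ⊗ₖ B) * γ).trace = (B * ptraceLeft ((A ⊗ₖ (1 : Matrix E E ℂ)) * γ)).trace := by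
  simp only [Matrix.trace, Matrix.diag, ptraceLeft, Matrix.of_apply, Matrix.mul_apply,
    kroneckerMap_apply, Fintype.sum_prod_type, Matrix.one_apply, mul_ite, mul_one, mul_zero,
    ite_mul, zero_mul, Finset.sum_ite_eq, Finset.sum_ite_eq', Finset.mem_univ, if_true,
    Finset.mul_sum, Finset.sum_mul]
  rw [Finset.sum_comm]
  apply Finset.sum_congr rfl; intro e _
  conv_lhs => enter [2, y]; rw [Finset.sum_comm]
  rw [Finset.sum_comm]
  conv_lhs => enter [2, x1]; rw [Finset.sum_comm]
  apply Finset.sum_congr rfl; intro a _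
  rw [Finset.sum_comm]
  apply Finset.sum_congr rfl; intro b _
  apply Finset.sum_congr rfl; intro c _
  ring

lemma aux_ptraceLeft_ct (γ : Matrix (D × E) (D × E) ℂ) : (ptraceLeft γ)ᴴ = ptraceLeft γᴴ := by
  ext e e'; simp [ptraceLeft, conjTranspose_apply]

lemma aux_ptraceLeft_sum {X : Type*} [Fintype X] (f : X → Matrix (D × E) (D × E) ℂ) :
    ptraceLeft (∑ x, f x) = ∑ x, ptraceLeft (f x) := by
  ext e e'
  simp [ptraceLeft, Matrix.sum_apply]
  rw [Finset.sum_comm]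

lemma aux_kron_ct (A : Matrix D D ℂ) (B : Matrix E E ℂ) : (A ⊗ₖ B)ᴴ = Aᴴ ⊗ₖ Bᴴ := by
  ext ⟨i, j⟩ ⟨k, l⟩
  simp [conjTranspose_apply, kroneckerMap_apply]

lemma aux_sum_kron {X : Type*} [Fintype X] (A : X → Matrix D D ℂ) (B : Matrix E E ℂ) :
    (∑ x, A x) ⊗ₖ B = ∑ x, A x ⊗ₖ B := by
  ext ⟨i, j⟩ ⟨k, l⟩
  simp [kroneckerMap_apply, Matrix.sum_apply, Finset.sum_mul]

end Aux

/-- if ρ = Tr_D γ has full support and the post-measurement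
second-player states ρ^x = Tr_D[(√R^x ⊗ I) γ (√R^x ⊗ I)] are pairwise
orthogonally supported, then there is a projective measurement {Q^x} on E with
Q^x ρ Q^x = ρ^x, and measuring {R^x} on D and {Q^x} on E always agrees:
Tr[(R^{x'} ⊗ Q^x) γ] = 0 for x ≠ x'. -/
theorem stmt19 {D E X : Type*} [Fintype D] [DecidableEq D] [Fintype E] [DecidableEq E]
    [Fintype X] [DecidableEq X]
    (γ : Matrix (D × E) (D × E) ℂ) (hγ : γ.PosSemidef) (htr : γ.trace = 1)
    (hfull : (ptraceLeft γ).PosDef)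
    (R : X → Matrix D D ℂ) (hR : ∀ x, (R x).PosSemidef) (hRsum : ∑ x, R x = 1)
    (horth : ∀ x x', x ≠ x' →
      ptraceLeft (((hR x).sqrt ⊗ₖ (1 : Matrix E E ℂ)) * γ *
          ((hR x).sqrt ⊗ₖ (1 : Matrix E E ℂ))) *
        ptraceLeft (((hR x').sqrt ⊗ₖ (1 : Matrix E E ℂ)) * γ *
          ((hR x').sqrt ⊗ₖ (1 : Matrix E E ℂ))) = 0) :
    ∃ Q : X → Matrix E E ℂ,
      (∀ x, (Q x).IsHermitian) ∧ (∀ x, Q x * Q x = Q x) ∧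
      (∀ x x', x ≠ x' → Q x * Q x' = 0) ∧ (∑ x, Q x = 1) ∧
      (∀ x, Q x * ptraceLeft γ * Q x
        = ptraceLeft (((hR x).sqrt ⊗ₖ (1 : Matrix E E ℂ)) * γ *
            ((hR x).sqrt ⊗ₖ (1 : Matrix E E ℂ)))) ∧
      (∀ x x', x ≠ x' → ((R x' ⊗ₖ Q x) * γ).trace = 0) := by
  classical
  set ρ : Matrix E E ℂ := ptraceLeft γ with hρ
  set σ : X → Matrix E E ℂ := fun x =>
    ptraceLeft (((hR x).sqrt ⊗ₖ (1 : Matrix E E ℂ)) * γ *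
      ((hR x).sqrt ⊗ₖ (1 : Matrix E E ℂ))) with hσ
  -- alternative form of σ
  have hσ_alt : ∀ x, σ x = ptraceLeft ((R x ⊗ₖ (1 : Matrix E E ℂ)) * γ) := by
    intro x
    rw [hσ]
    simp only
    rw [aux_ptraceLeft_kmk, (hR x).sqrt_mul_self]
  -- σ sums to ρ
  have hsum : ∑ x, σ x = ρ := by
    have : ∑ x, σ x = ptraceLeft (∑ x, (R x ⊗ₖ (1 : Matrix E E ℂ)) * γ) := by
      rw [aux_ptraceLeft_sum]
      exact Finset.sum_congr rfl fun x _ => hσ_alt x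
    rw [this, ← Finset.sum_mul, ← aux_sum_kron, hRsum, one_kronecker_one, one_mul]
  -- σ hermitian
  have hherm : ∀ x, (σ x).IsHermitian := by
    intro x
    have hs : ((hR x).sqrt ⊗ₖ (1 : Matrix E E ℂ))ᴴ = (hR x).sqrt ⊗ₖ (1 : Matrix E E ℂ) := by
      rw [aux_kron_ct, (hR x).posSemidef_sqrt.isHermitian.eq, Matrix.conjTranspose_one]
    show (σ x)ᴴ = σ x
    rw [hσ]
    simp only
    rw [aux_ptraceLeft_ct, Matrix.conjTranspose_mul, Matrix.conjTranspose_mul, hs,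
      hγ.isHermitian.eq, Matrix.mul_assoc]
  -- orthogonality
  have horth' : ∀ x x', x ≠ x' → σ x * σ x' = 0 := fun x x' h => horth x x' h
  -- ρ hermitian, invertible
  have hρherm : ρ.IsHermitian := hfull.isHermitian
  have hdet : IsUnit ρ.det := by
    rw [isUnit_iff_ne_zero]
    exact ne_of_gt hfull.det_pos
  have hinv1 : ρ⁻¹ * ρ = 1 := Matrix.nonsing_inv_mul ρ hdet
  have hinv2 : ρ * ρ⁻¹ = 1 := Matrix.mul_nonsing_inv ρ hdet
  -- commutation: ρ * σ x = σ x * σ x = σ x * ρ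
  have hc1 : ∀ x, ρ * σ x = σ x * σ x := by
    intro x
    rw [← hsum, Finset.sum_mul]
    rw [Finset.sum_eq_single x (fun y _ hy => horth' y x hy) (by simp)]
  have hc2 : ∀ x, σ x * ρ = σ x * σ x := by
    intro x
    rw [← hsum, Finset.mul_sum]
    rw [Finset.sum_eq_single x (fun y _ hy => horth' x y (Ne.symm hy)) (by simp)]
  have hcomm : ∀ x, ρ * σ x = σ x * ρ := fun x => (hc1 x).trans (hc2 x).symm
  have hcomm' : ∀ x, ρ⁻¹ * σ x = σ x * ρ⁻¹ := by
    intro x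
    calc ρ⁻¹ * σ x = ρ⁻¹ * (σ x * (ρ * ρ⁻¹)) := by rw [hinv2, Matrix.mul_one]
      _ = ρ⁻¹ * (σ x * ρ * ρ⁻¹) := by rw [Matrix.mul_assoc (σ x)]
      _ = ρ⁻¹ * (ρ * σ x * ρ⁻¹) := by rw [← hcomm]
      _ = ρ⁻¹ * ρ * (σ x * ρ⁻¹) := by simp only [Matrix.mul_assoc]
      _ = σ x * ρ⁻¹ := by rw [hinv1, Matrix.one_mul]
  have hinvherm : ρ⁻¹ᴴ = ρ⁻¹ := by
    rw [Matrix.conjTranspose_nonsing_inv, hρherm.eq]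
  refine ⟨fun x => ρ⁻¹ * σ x, ?_, ?_, ?_, ?_, ?_, ?_⟩
  · -- hermitian
    intro x
    show (ρ⁻¹ * σ x)ᴴ = ρ⁻¹ * σ x
    rw [Matrix.conjTranspose_mul, hinvherm, (hherm x).eq, hcomm']
  · -- idempotent
    intro x
    calc ρ⁻¹ * σ x * (ρ⁻¹ * σ x) = ρ⁻¹ * (σ x * ρ⁻¹ * σ x) := by
          simp only [Matrix.mul_assoc]
      _ = ρ⁻¹ * (ρ⁻¹ * σ x * σ x) := by rw [← hcomm']
      _ = ρ⁻¹ * (ρ⁻¹ * (σ x * σ x)) := by simp only [Matrix.mul_assoc]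
      _ = ρ⁻¹ * (ρ⁻¹ * (ρ * σ x)) := by rw [← hc1]
      _ = ρ⁻¹ * σ x := by rw [← Matrix.mul_assoc ρ⁻¹ ρ (σ x), hinv1, Matrix.one_mul]
  · -- orthogonal
    intro x x' h
    calc ρ⁻¹ * σ x * (ρ⁻¹ * σ x') = ρ⁻¹ * (σ x * ρ⁻¹ * σ x') := by
          simp only [Matrix.mul_assoc]
      _ = ρ⁻¹ * (ρ⁻¹ * σ x * σ x') := by rw [← hcomm']
      _ = ρ⁻¹ * (ρ⁻¹ * (σ x * σ x')) := by simp only [Matrix.mul_assoc]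
      _ = 0 := by rw [horth' x x' h, Matrix.mul_zero, Matrix.mul_zero]
  · -- sums to 1
    rw [← Finset.mul_sum, hsum, hinv1]
  · -- Q x ρ Q x = σ x
    intro x
    show ρ⁻¹ * σ x * ρ * (ρ⁻¹ * σ x) = σ x
    calc ρ⁻¹ * σ x * ρ * (ρ⁻¹ * σ x) = ρ⁻¹ * (σ x * (ρ * (ρ⁻¹ * σ x))) := by
          simp only [Matrix.mul_assoc]
      _ = ρ⁻¹ * (σ x * σ x) := by
          rw [← Matrix.mul_assoc ρ ρ⁻¹ (σ x), hinv2, Matrix.one_mul]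
      _ = ρ⁻¹ * (ρ * σ x) := by rw [← hc1]
      _ = σ x := by rw [← Matrix.mul_assoc, hinv1, Matrix.one_mul]
  · -- agreement
    intro x x' h
    rw [aux_trace_kron, ← hσ_alt x', Matrix.mul_assoc, horth' x x' h, Matrix.mul_zero,
      Matrix.trace_zero]
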